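/- (Mass–volume balance in the radial case) Let (u,R) solve the radial nonlocal Stefan problem in ℝ^N: ∂_t u = J∗u − u in {|x| < R(t)}, u = 0 outside, and d/dt(R^N(t)) = N ∫_{R(t)}^∞ r^{N−1} (A_J u)(r,t) dr. Then d/dt |B(0,R(t))| = − d/dt ∫_{ℝ^N} u(·,t), and consequently R(t) ≤ (M(0)/ω_N + R(0)^N)^{1/N} for all t, where ω_N = |B(0,1)| and M(0) = ∫ u(·,0). -/

import Mathlib

open MeasureTheory Real Set

theorem stmt_17 (N : ℕ) (hN : 0 < N) (ωN : ℝ)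
    (J : EuclideanSpace ℝ (Fin N) → ℝ) (u : EuclideanSpace ℝ (Fin N) → ℝ → ℝ)
    (R M M' : ℝ → ℝ)
    (hω : ωN = (volume (Metric.ball (0 : EuclideanSpace ℝ (Fin N)) 1)).toReal)
    (hJc : Continuous J) (hJnn : ∀ x, 0 ≤ J x)
    (hJrad : ∀ x y, ‖x‖ = ‖y‖ → J x = J y) (hJ1 : (∫ x, J x) = 1)
    (hunn : ∀ x t, 0 ≤ u x t) (huint : ∀ t, Integrable fun x => u x t)
    (husupp : ∀ x t, 0 ≤ t → R t ≤ ‖x‖ → u x t = 0)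
    (hRm : Monotone R) (hR0 : 0 < R 0) (hRc : ContinuousOn R (Set.Ici 0))
    (hM : ∀ t, M t = ∫ x, u x t)
    (hMc : ContinuousOn M (Set.Ici 0))
    (hMd : ∀ t, 0 < t → HasDerivAt M (M' t) t)
    (hMunder : ∀ t, 0 < t →
      M' t = ∫ x in Metric.ball (0 : EuclideanSpace ℝ (Fin N)) (R t),
        ((∫ y, J (x - y) * u y t) - u x t))
    (hstefan : ∀ t, 0 < t →
      HasDerivAt (fun t => ωN * R t ^ N)
        (∫ x in {x : EuclideanSpace ℝ (Fin N) | R t < ‖x‖},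
          ∫ y, J (x - y) * u y t) t) :
    (∀ t, 0 < t → HasDerivAt (fun t => ωN * R t ^ N) (-(M' t)) t) ∧
      (∀ t, 0 ≤ t → R t ≤ (M 0 / ωN + R 0 ^ N) ^ ((1 : ℝ) / N)) := by
  haveI : Nonempty (Fin N) := ⟨⟨0, hN⟩⟩
  -- J is integrable
  have hJint : Integrable J := by
    by_contra h
    rw [integral_undef h] at hJ1
    norm_num at hJ1
  -- Part 1
  have part1 : ∀ t, 0 < t → HasDerivAt (fun t => ωN * R t ^ N) (-(M' t)) t := by
    intro t ht
    set f : EuclideanSpace ℝ (Fin N) → ℝ := fun x => u x t with hf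
    set g : EuclideanSpace ℝ (Fin N) → ℝ := fun x => ∫ y, J (x - y) * f y with hg
    have hfint : Integrable f := huint t
    have hgconv : g = convolution f J (ContinuousLinearMap.mul ℝ ℝ) volume := by
      funext x
      rw [convolution_def]
      simp only [ContinuousLinearMap.mul_apply']
      have : ∀ y : EuclideanSpace ℝ (Fin N), J (x - y) * f y = f y * J (x - y) :=
        fun y => mul_comm _ _
      simp_rw [hg, this]
    have hgint : Integrable g := by
      rw [hgconv]
      exact hfint.integrable_convolution (ContinuousLinearMap.mul ℝ ℝ) hJint
    have hgtot : ∫ x, g x = M t := by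
      rw [hgconv, integral_convolution (ContinuousLinearMap.mul ℝ ℝ) hfint hJint, hJ1]
      simp [hM t, hf]
    set B := Metric.ball (0 : EuclideanSpace ℝ (Fin N)) (R t) with hB
    have hBm : MeasurableSet B := measurableSet_ball
    have huB : ∫ x in B, f x = M t := by
      rw [setIntegral_eq_integral_of_forall_compl_eq_zero, ← hM t]
      intro x hx
      exact husupp x t ht.le (by simpa [hB, mem_ball_zero_iff, not_lt] using hx)
    have hsplit : (∫ x in B, g x) + ∫ x in Bᶜ, g x = M t := by
      rw [integral_add_compl hBm hgint, hgtot]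
    have hset : (∫ x in {x : EuclideanSpace ℝ (Fin N) | R t < ‖x‖}, g x) = ∫ x in Bᶜ, g x := by
      apply setIntegral_congr_set
      have hsub : Bᶜ \ {x : EuclideanSpace ℝ (Fin N) | R t < ‖x‖}
          ⊆ Metric.sphere (0 : EuclideanSpace ℝ (Fin N)) (R t) := by
        intro x hx
        simp only [mem_diff, mem_compl_iff, hB, Metric.mem_ball, dist_zero_right,
          mem_setOf_eq, not_lt] at hx
        simp [mem_sphere_zero_iff_norm, le_antisymm hx.2 hx.1]
      rw [MeasureTheory.ae_eq_set]
      constructor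
      · refine measure_mono_null ?_ (measure_empty)
        intro x hx
        simp only [mem_diff, mem_setOf_eq, mem_compl_iff, hB, Metric.mem_ball,
          dist_zero_right, not_not] at hx
        exact absurd hx.1 (not_lt.2 hx.2.le)
      · exact measure_mono_null hsub (Measure.addHaar_sphere volume _ _)
    have hM' : M' t = (∫ x in B, g x) - M t := by
      rw [hMunder t ht, integral_sub hgint.integrableOn hfint.integrableOn, huB]
    have hD : (∫ x in {x : EuclideanSpace ℝ (Fin N) | R t < ‖x‖}, g x) = -(M' t) := by
      rw [hset, hM']
      linarith
    have := hstefan t ht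
    rw [show (∫ x in {x : EuclideanSpace ℝ (Fin N) | R t < ‖x‖}, ∫ y, J (x - y) * u y t)
        = ∫ x in {x : EuclideanSpace ℝ (Fin N) | R t < ‖x‖}, g x from rfl, hD] at this
    exact this
  refine ⟨part1, ?_⟩
  -- Part 2
  have hωpos : 0 < ωN := by
    rw [hω]
    exact ENNReal.toReal_pos (Metric.measure_ball_pos volume _ one_pos).ne'
      measure_ball_lt_top.ne
  set F : ℝ → ℝ := fun s => ωN * R s ^ N + M s with hF
  have hFc : ContinuousOn F (Set.Ici 0) := (continuousOn_const.mul (hRc.pow N)).add hMc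
  have hF' : ∀ s ∈ interior (Set.Ici (0 : ℝ)), HasDerivAt F 0 s := by
    intro s hs
    rw [interior_Ici, mem_Ioi] at hs
    have h := (part1 s hs).add (hMd s hs)
    simp only [neg_add_cancel] at h
    exact h
  have hFdiff : DifferentiableOn ℝ F (interior (Set.Ici (0 : ℝ))) :=
    fun s hs => ((hF' s hs).differentiableAt).differentiableWithinAt
  have hmono : MonotoneOn F (Set.Ici 0) :=
    monotoneOn_of_deriv_nonneg (convex_Ici 0) hFc hFdiff
      (fun s hs => by rw [(hF' s hs).deriv])
  have hanti : AntitoneOn F (Set.Ici 0) :=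
    antitoneOn_of_deriv_nonpos (convex_Ici 0) hFc hFdiff
      (fun s hs => by rw [(hF' s hs).deriv])
  intro t ht
  have hconst : F t = F 0 :=
    le_antisymm (hanti self_mem_Ici ht ht) (hmono self_mem_Ici ht ht)
  have hMt : 0 ≤ M t := by
    rw [hM t]
    exact integral_nonneg fun x => hunn x t
  have hkey : ωN * R t ^ N ≤ ωN * R 0 ^ N + M 0 := by
    have : ωN * R t ^ N + M t = ωN * R 0 ^ N + M 0 := hconst
    linarith
  have h1 : R t ^ N ≤ M 0 / ωN + R 0 ^ N := by
    rw [show M 0 / ωN + R 0 ^ N = (ωN * R 0 ^ N + M 0) / ωN by field_simp; ring]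
    exact (le_div_iff₀ hωpos).2 (by linarith [hkey])
  have hRt : 0 < R t := hR0.trans_le (hRm ht)
  have hNne : (N : ℝ) ≠ 0 := Nat.cast_ne_zero.2 hN.ne'
  calc R t = (R t ^ N) ^ ((1 : ℝ) / N) := by
        rw [← Real.rpow_natCast (R t) N, ← Real.rpow_mul hRt.le, mul_one_div,
          div_self hNne, Real.rpow_one]
    _ ≤ (M 0 / ωN + R 0 ^ N) ^ ((1 : ℝ) / N) :=
        Real.rpow_le_rpow (pow_nonneg hRt.le N) h1 (by positivity)
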